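/- Let g(x) = x − λ_n − (s−2)·log(h(η(x))), where η(x) = (x − λ_{k+1})/(λ_{k+1} − λ_n) and h(η) = 1 + 2η + 2√(η + η²). Then g is convex on [λ_k, λ₁] (where λ_k ≥ λ_{k+1}), so its maximum on [λ_k, λ₁] is attained at an endpoint; moreover if s ≥ 2 + (λ₁ − λ_k)/log((λ₁ − λ_n)/(λ_k − λ_n)), then the maximum is attained at x = λ_k. -/

import Mathlib

open Real Set

lemma arsinh_concaveOn : ConcaveOn ℝ (Set.Ici (0:ℝ)) Real.arsinh := by
  apply AntitoneOn.concaveOn_of_deriv (convex_Ici 0) Real.continuous_arsinh.continuousOn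
    Real.differentiable_arsinh.differentiableOn
  intro x hx y hy hxy
  rw [interior_Ici, mem_Ioi] at hx hy
  rw [(Real.hasDerivAt_arsinh x).deriv, (Real.hasDerivAt_arsinh y).deriv]
  have h1 : (0:ℝ) < Real.sqrt (1 + x ^ 2) := Real.sqrt_pos.2 (by positivity)
  exact inv_anti₀ h1 (Real.sqrt_le_sqrt (by nlinarith))

lemma sqrt_img : Real.sqrt '' (Set.Ici 0) = Set.Ici (0:ℝ) := by
  ext x
  constructor
  · rintro ⟨y, -, rfl⟩; exact Real.sqrt_nonneg y
  · intro hx; exact ⟨x ^ 2, Set.mem_Ici.2 (by positivity), Real.sqrt_sq hx⟩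

lemma phi_concaveOn : ConcaveOn ℝ (Set.Ici (0:ℝ))
    (fun t => 2 * Real.arsinh (Real.sqrt t)) := by
  have hcomp : ConcaveOn ℝ (Set.Ici (0:ℝ)) (Real.arsinh ∘ Real.sqrt) := by
    refine ConcaveOn.comp ?_ ?_ ?_
    · rw [sqrt_img]; exact arsinh_concaveOn
    · have := Real.strictConcaveOn_sqrt.concaveOn
      exact this
    · rw [sqrt_img]; exact fun a _ b _ hab => Real.arsinh_le_arsinh.2 hab
  have := hcomp.smul (c := (2:ℝ)) (by norm_num)
  simpa [smul_eq_mul, Function.comp] using this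

lemma log_h_eq (t : ℝ) (ht : 0 ≤ t) :
    Real.log (1 + 2 * t + 2 * Real.sqrt (t + t ^ 2)) =
      2 * Real.arsinh (Real.sqrt t) := by
  have h1 : Real.sqrt t ^ 2 = t := Real.sq_sqrt ht
  have h1t : (0:ℝ) ≤ 1 + t := by linarith
  have h2 : Real.sqrt t * Real.sqrt (1 + t) = Real.sqrt (t + t ^ 2) := by
    rw [← Real.sqrt_mul ht]; ring_nf
  have h3 : (Real.sqrt t + Real.sqrt (1 + t)) ^ 2
      = 1 + 2 * t + 2 * Real.sqrt (t + t ^ 2) := by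
    have ha := Real.sq_sqrt ht
    have hb := Real.sq_sqrt h1t
    nlinarith [h2]
  rw [← h3, Real.log_pow]
  rw [Real.arsinh, h1]
  push_cast
  ring

set_option maxHeartbeats 1000000 in
/-- Convexity of `g(x) = x − λ_n − (s−2)·log(h(η(x)))` on `[λ_k, λ₁]`, endpoint
maximization, and attainment at `λ_k` under the degree condition on `s`. -/
theorem stmt15 (lam1 lamk lamk1 lamn : ℝ)
    (h1 : lamk < lam1) (h2 : lamk1 < lamk) (h3 : lamn < lamk1)
    (s : ℕ) (hs : 2 ≤ s) :
    let η : ℝ → ℝ := fun x => (x - lamk1) / (lamk1 - lamn)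
    let h : ℝ → ℝ := fun t => 1 + 2 * t + 2 * Real.sqrt (t + t ^ 2)
    let g : ℝ → ℝ := fun x => x - lamn - ((s : ℝ) - 2) * Real.log (h (η x))
    ConvexOn ℝ (Set.Icc lamk lam1) g ∧
    (∀ x ∈ Set.Icc lamk lam1, g x ≤ max (g lamk) (g lam1)) ∧
    (2 + (lam1 - lamk) / Real.log ((lam1 - lamn) / (lamk - lamn)) ≤ (s : ℝ) →
      ∀ x ∈ Set.Icc lamk lam1, g x ≤ g lamk) := by
  intro η h g
  have hd : (0:ℝ) < lamk1 - lamn := by linarith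
  have hη_mem : ∀ x ∈ Set.Icc lamk lam1, 0 ≤ η x := by
    intro x hx
    exact div_nonneg (by linarith [hx.1]) hd.le
  have heq : ∀ x ∈ Set.Icc lamk lam1,
      Real.log (h (η x)) = 2 * Real.arsinh (Real.sqrt (η x)) := by
    intro x hx
    exact log_h_eq _ (hη_mem x hx)
  have hηcomb : ∀ (x y a b : ℝ), a + b = 1 →
      η (a * x + b * y) = a * η x + b * η y := by
    intro x y a b hab
    simp only [η]
    rw [show a * x + b * y - lamk1 = a * (x - lamk1) + b * (y - lamk1) by
      linear_combination lamk1 * hab]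
    rw [add_div, mul_div_assoc, mul_div_assoc]
  have hlog : ConcaveOn ℝ (Set.Icc lamk lam1) (fun x => Real.log (h (η x))) := by
    refine ⟨convex_Icc _ _, fun x hx y hy a b ha hb hab => ?_⟩
    have hxy := (convex_Icc lamk lam1) hx hy ha hb hab
    simp only [smul_eq_mul] at *
    rw [heq x hx, heq y hy, heq _ hxy, hηcomb x y a b hab]
    have := phi_concaveOn.2 (Set.mem_Ici.2 (hη_mem x hx)) (Set.mem_Ici.2 (hη_mem y hy))
      ha hb hab
    simpa [smul_eq_mul] using this
  have hcoef : (0:ℝ) ≤ (s:ℝ) - 2 := by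
    have : (2:ℝ) ≤ (s:ℝ) := by exact_mod_cast hs
    linarith
  have hconv : ConvexOn ℝ (Set.Icc lamk lam1) g := by
    have hsmul : ConcaveOn ℝ (Set.Icc lamk lam1)
        (fun x => ((s:ℝ) - 2) * Real.log (h (η x))) := by
      have := hlog.smul hcoef
      simpa [smul_eq_mul] using this
    have haff : ConvexOn ℝ (Set.Icc lamk lam1) (fun x : ℝ => x - lamn) := by
      refine ⟨convex_Icc _ _, fun x _ y _ a b ha hb hab => le_of_eq ?_⟩
      simp only [smul_eq_mul]
      linear_combination lamn * hab
    have hfun : g = ((fun x : ℝ => x - lamn) - fun x => ((s:ℝ) - 2) * Real.log (h (η x))) := by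
      funext z; simp [g]
    rw [hfun]
    exact haff.sub hsmul
  refine ⟨hconv, ?_, ?_⟩
  · intro x hx
    exact hconv.le_max_of_mem_Icc (Set.left_mem_Icc.2 h1.le)
      (Set.right_mem_Icc.2 h1.le) hx
  · intro hss x hx
    -- show g lam1 ≤ g lamk
    have hkmem : lamk ∈ Set.Icc lamk lam1 := Set.left_mem_Icc.2 h1.le
    have h1mem : lam1 ∈ Set.Icc lamk lam1 := Set.right_mem_Icc.2 h1.le
    set e1 := η lam1 with he1def
    set ek := η lamk with hekdef
    have hek : 0 < ek := div_pos (by linarith) hd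
    have he1k : ek < e1 := (div_lt_div_iff_of_pos_right hd).2 (by linarith)
    have he1pos : 0 < e1 := hek.trans he1k
    -- key algebraic inequality: h ek * (1 + e1) ≤ h e1 * (1 + ek)
    have hb2 : Real.sqrt (ek + ek ^ 2) ^ 2 = ek + ek ^ 2 := Real.sq_sqrt (by positivity)
    have ha2 : Real.sqrt (e1 + e1 ^ 2) ^ 2 = e1 + e1 ^ 2 :=
      Real.sq_sqrt (by positivity)
    set a := Real.sqrt (e1 + e1 ^ 2) with hadef
    set b := Real.sqrt (ek + ek ^ 2) with hbdef
    have ha0 : 0 ≤ a := Real.sqrt_nonneg _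
    have hb0 : 0 ≤ b := Real.sqrt_nonneg _
    have hprod : 0 < (1 + e1) * (1 + ek) * (e1 - ek) := by
      apply mul_pos (mul_pos (by linarith) (by linarith)) (by linarith)
    have hpoly : (ek + ek ^ 2) * (1 + e1) ^ 2 ≤ (e1 + e1 ^ 2) * (1 + ek) ^ 2 := by
      nlinarith [hprod]
    have hsq : (b * (1 + e1)) ^ 2 ≤ (a * (1 + ek)) ^ 2 := by
      rw [mul_pow, mul_pow, ha2, hb2]
      exact hpoly
    have hab : b * (1 + e1) ≤ a * (1 + ek) := by
      have := Real.sqrt_le_sqrt hsq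
      rwa [Real.sqrt_sq (by positivity), Real.sqrt_sq (by positivity)] at this
    have key : h ek * (1 + e1) ≤ h e1 * (1 + ek) := by
      simp only [h]
      nlinarith [hab, he1k]
    have hhk_pos : 0 < h ek := by
      simp only [h]; positivity
    have hh1_pos : 0 < h e1 := by
      simp only [h]
      have : 0 ≤ Real.sqrt (e1 + e1 ^ 2) := Real.sqrt_nonneg _
      nlinarith
    have hr : (1 + e1) / (1 + ek) ≤ h e1 / h ek := by
      rw [div_le_div_iff₀ (by linarith) hhk_pos]
      linarith [key]
    have hid : (1 + e1) / (1 + ek) = (lam1 - lamn) / (lamk - lamn) := by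
      have h1' : 1 + e1 = (lam1 - lamn) / (lamk1 - lamn) := by
        simp only [he1def, η]; field_simp; ring
      have hk' : 1 + ek = (lamk - lamn) / (lamk1 - lamn) := by
        simp only [hekdef, η]; field_simp; ring
      rw [h1', hk']
      rw [div_div_div_cancel_right₀]
      exact hd.ne'
    have hlogr : Real.log ((lam1 - lamn) / (lamk - lamn))
        ≤ Real.log (h e1) - Real.log (h ek) := by
      rw [← Real.log_div hh1_pos.ne' hhk_pos.ne', ← hid]
      apply Real.log_le_log (by positivity) hr
    have hL : 0 < Real.log ((lam1 - lamn) / (lamk - lamn)) := by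
      apply Real.log_pos
      rw [lt_div_iff₀ (by linarith)]
      linarith
    set L := Real.log ((lam1 - lamn) / (lamk - lamn)) with hLdef
    have hsL : lam1 - lamk ≤ ((s:ℝ) - 2) * L := by
      have : (lam1 - lamk) / L ≤ (s:ℝ) - 2 := by linarith
      calc lam1 - lamk = (lam1 - lamk) / L * L := by field_simp
        _ ≤ ((s:ℝ) - 2) * L := by
            exact mul_le_mul_of_nonneg_right this hL.le
    have hmono : ((s:ℝ) - 2) * L
        ≤ ((s:ℝ) - 2) * (Real.log (h e1) - Real.log (h ek)) :=
      mul_le_mul_of_nonneg_left hlogr hcoef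
    have hg1k : g lam1 ≤ g lamk := by
      show lam1 - lamn - ((s:ℝ) - 2) * Real.log (h e1) ≤
        lamk - lamn - ((s:ℝ) - 2) * Real.log (h ek)
      linarith
    calc g x ≤ max (g lamk) (g lam1) :=
          hconv.le_max_of_mem_Icc hkmem h1mem hx
      _ ≤ g lamk := max_le le_rfl hg1k
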